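/- For all k ≥ 0, the number of k-Rvalid vectors of size 2 equals (4^k + 2)/3; equivalently, 3 times the number of k-Rvalid vectors of size 2 equals 4^k + 2. -/

import Mathlib

open Finset

/-- `Π·h`: the vector whose `q`-th entry is the union of the `Π p` over all `p` with `h p = q`. -/
def dotAct {n : ℕ} (Pi : Fin n → Finset ℕ) (h : Fin n → Fin n) : Fin n → Finset ℕ :=
  fun q => (Finset.univ.filter (fun p => h p = q)).biUnion Pi

/-- Entrywise union of two vectors of sets. -/
def vUnion {n : ℕ} (Pi Pi' : Fin n → Finset ℕ) : Fin n → Finset ℕ :=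
  fun q => Pi q ∪ Pi' q

/-- `r = max (π₀ ∪ … ∪ π_{n−1})`. -/
def vMax {n : ℕ} (Pi : Fin n → Finset ℕ) : ℕ :=
  (Finset.univ.sup Pi).sup id

/-- `Π↑`: add `r = max (π₀ ∪ … ∪ π_{n−1})` to every element of every entry. -/
def vUp {n : ℕ} (Pi : Fin n → Finset ℕ) : Fin n → Finset ℕ :=
  fun q => (Pi q).image (· + vMax Pi)

/-- A `k`-EXPcomposition of size `n`: pairwise disjoint entries whose union is `{1,…,2^k}`. -/
def IsEXP {n : ℕ} (k : ℕ) (Pi : Fin n → Finset ℕ) : Prop :=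
  (∀ p q : Fin n, p ≠ q → Disjoint (Pi p) (Pi q)) ∧
    Finset.univ.sup Pi = Finset.Icc 1 (2 ^ k)

/-- A `k`-Rvalid vector of size `n`. -/
def IsRvalid {n : ℕ} (k : ℕ) (ρ : Fin n → Finset ℕ) : Prop :=
  IsEXP k ρ ∧ (∀ p : Fin n, p.val = 0 → 1 ∈ ρ p) ∧
    ∀ k' < k, ∀ i ∈ Finset.Icc 1 (2 ^ k'), ∀ j ∈ Finset.Icc 1 (2 ^ k'),
      (∃ α, i ∈ ρ α ∧ j ∈ ρ α) → ∃ β, i + 2 ^ k' ∈ ρ β ∧ j + 2 ^ k' ∈ ρ β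

/-- A `k`-Lvalid vector of size `m`. -/
def IsLvalid {m : ℕ} (k : ℕ) (lam : Fin m → Finset ℕ) : Prop :=
  IsEXP k lam ∧ (∀ p : Fin m, p.val = 0 → 2 ^ k ∈ lam p) ∧
    ∀ k' < k, ∀ i ∈ Finset.Icc 1 (2 ^ k'), ∀ j ∈ Finset.Icc 1 (2 ^ k'),
      (∃ α, 2 ^ k + 1 - i ∈ lam α ∧ 2 ^ k + 1 - j ∈ lam α) →
        ∃ β, 2 ^ k + 1 - (i + 2 ^ k') ∈ lam β ∧ 2 ^ k + 1 - (j + 2 ^ k') ∈ lam β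

/-- Number of nonempty entries of a vector of sets. -/
def nne {n : ℕ} (Pi : Fin n → Finset ℕ) : ℕ :=
  (Finset.univ.filter (fun q => Pi q ≠ ∅)).card

/-- `succ(P) = {P ∪ (P·g)↑ : g}`. -/
def succSet {n : ℕ} (P : Fin n → Finset ℕ) : Finset (Fin n → Finset ℕ) :=
  (Finset.univ : Finset (Fin n → Fin n)).image (fun g => vUnion P (vUp (dotAct P g)))

/-- The graded set `U_{m,n}^{(k)}` of U-pairs. -/
def Uset (m n : ℕ) : ℕ → Set ((Fin m → Finset ℕ) × (Fin n → Finset ℕ))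
  | 0 => {x | x = (fun p => if p.val = 0 then {1} else ∅,
                   fun q => if q.val = 0 then {1} else ∅)}
  | k + 1 => {x | ∃ L P, (L, P) ∈ Uset m n k ∧ ∃ (f : Fin m → Fin m) (g : Fin n → Fin n),
      x = (vUnion (dotAct L f) (vUp L), vUnion P (vUp (dotAct P g)))}

/-- The `r`-Stirling number: partitions of `{1,…,a}` into `b` nonempty blocks
with `1,…,r` in pairwise distinct blocks. -/
noncomputable def rStirling (a b r : ℕ) : ℕ :=
  Set.ncard {C : Finset (Finset ℕ) |
    C.card = b ∧ (∅ ∉ C) ∧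
    (∀ B ∈ C, ∀ B' ∈ C, B ≠ B' → Disjoint B B') ∧
    C.sup id = Finset.Icc 1 a ∧
    ∀ x ∈ Finset.Icc 1 r, ∀ y ∈ Finset.Icc 1 r, x ≠ y →
      ∀ B ∈ C, x ∈ B → y ∉ B}

/-- The Stirling number of the second kind: the number of partitions of an
`a`-element set into `b` nonempty blocks. -/
noncomputable def stirling2 (a b : ℕ) : ℕ := rStirling a b 0

/-- The entry `s_n^{(i,j)}` (with `1 ≤ i,j ≤ n`). -/
noncomputable def sEntry (n i j : ℕ) : ℕ :=
  if i ≤ j then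
    (j - i).factorial * Nat.choose (n - i) (j - i) *
      ∑ α ∈ Finset.Icc (j - i) i, Nat.choose i α * i ^ (i - α) * stirling2 α (j - i)
  else 0

/-- The matrix `S_n`, with rows and columns indexed by `{1,…,n}`. -/
noncomputable def Smat (n : ℕ) : Matrix (Fin n) (Fin n) ℕ :=
  fun i j => sEntry n (i.val + 1) (j.val + 1)

/-- One step of the shuffle-automaton action on subsets of the grid. -/
def stepE {m n : ℕ} (E : Finset (Fin m × Fin n)) (f : Fin m → Fin m) (g : Fin n → Fin n) :
    Finset (Fin m × Fin n) :=
  E.image (fun p => (f p.1, p.2)) ∪ E.image (fun p => (p.1, g p.2))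

/-- Reachability from `{(0,0)}` by finitely many steps. -/
def Reach {m n : ℕ} (hm : 0 < m) (hn : 0 < n) (E : Finset (Fin m × Fin n)) : Prop :=
  Relation.ReflTransGen (fun E1 E2 => ∃ f g, E2 = stepE E1 f g)
    {(⟨0, hm⟩, ⟨0, hn⟩)} E

/-- Reachability from `{(0,0)}` in at most `t` steps. -/
def ReachIn {m n : ℕ} (hm : 0 < m) (hn : 0 < n) :
    ℕ → Finset (Fin m × Fin n) → Prop
  | 0, E => E = {(⟨0, hm⟩, ⟨0, hn⟩)}
  | t + 1, E => ReachIn hm hn t E ∨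
      ∃ E' f g, ReachIn hm hn t E' ∧ E = stepE E' f g

/-- `s(Λ,P) = {(i,j) : λ_i ∩ ρ_j ≠ ∅}`. -/
def sTab {m n : ℕ} (L : Fin m → Finset ℕ) (P : Fin n → Finset ℕ) :
    Finset (Fin m × Fin n) :=
  Finset.univ.filter (fun p => (L p.1 ∩ P p.2).Nonempty)

open scoped Classical


def Tcond (k : ℕ) (A : Finset ℕ) : Prop :=
  1 ∉ A ∧ ∀ k' < k, ∀ i ∈ Finset.Icc 1 (2^k'), ∀ j ∈ Finset.Icc 1 (2^k'),
    ((i ∈ A) ↔ (j ∈ A)) → ((i + 2^k' ∈ A) ↔ (j + 2^k' ∈ A))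

noncomputable def Tset (k : ℕ) : Finset (Finset ℕ) :=
  ((Finset.Icc 1 (2^k)).powerset).filter (Tcond k)

lemma mem_Tset {k : ℕ} {A : Finset ℕ} :
    A ∈ Tset k ↔ A ⊆ Finset.Icc 1 (2^k) ∧ Tcond k A := by
  simp [Tset, Finset.mem_filter, Finset.mem_powerset]

lemma empty_mem_Tset (k : ℕ) : ∅ ∈ Tset k := by
  rw [mem_Tset]
  refine ⟨Finset.empty_subset _, Finset.notMem_empty _, ?_⟩
  intro k' _ i _ j _ _
  simp

/-- the extension of a bottom-half set `A'` by top-half data `(b0, b1)`. -/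
noncomputable def extT (k : ℕ) (A' : Finset ℕ) (b : Bool × Bool) : Finset ℕ :=
  A' ∪ (if b.2 then A'.image (· + 2^k) else ∅)
    ∪ (if b.1 then (Finset.Icc 1 (2^k) \ A').image (· + 2^k) else ∅)

lemma mem_shift {S : Finset ℕ} {k y : ℕ} :
    y ∈ S.image (· + 2^k) ↔ ∃ x ∈ S, x + 2^k = y := by simp [Finset.mem_image]

lemma shift_mem {S : Finset ℕ} {k x : ℕ} :
    x + 2^k ∈ S.image (· + 2^k) ↔ x ∈ S := by
  simp only [Finset.mem_image]
  constructor
  · rintro ⟨y, hy, h⟩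
    have : y = x := by omega
    exact this ▸ hy
  · intro h; exact ⟨x, h, rfl⟩

lemma mem_extT_low {k : ℕ} {A' : Finset ℕ} (hA' : A' ⊆ Finset.Icc 1 (2^k))
    {b : Bool × Bool} {x : ℕ} (hx : x ≤ 2^k) : x ∈ extT k A' b ↔ x ∈ A' := by
  have hhigh : ∀ S : Finset ℕ, S ⊆ Finset.Icc 1 (2^k) → x ∉ S.image (· + 2^k) := by
    intro S hSsub hS
    rcases Finset.mem_image.mp hS with ⟨y, hyS, hy⟩
    have := Finset.mem_Icc.mp (hSsub hyS)
    omega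
  simp only [extT, Finset.mem_union]
  constructor
  · rintro ((h|h)|h)
    · exact h
    · split at h
      · exact absurd h (hhigh _ hA')
      · exact absurd h (Finset.notMem_empty _)
    · split at h
      · exact absurd h (hhigh _ (fun y hy => (Finset.mem_sdiff.mp hy).1))
      · exact absurd h (Finset.notMem_empty _)
  · exact fun h => Or.inl (Or.inl h)

lemma mem_extT_high {k : ℕ} {A' : Finset ℕ} (hA' : A' ⊆ Finset.Icc 1 (2^k))
    {b : Bool × Bool} {x : ℕ} (hx : x ∈ Finset.Icc 1 (2^k)) :
    x + 2^k ∈ extT k A' b ↔ (if x ∈ A' then b.2 else b.1) = true := by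
  have h2 : 0 < 2^k := Nat.pow_pos (by norm_num)
  have hxk : 2^k < x + 2^k := by
    rw [Finset.mem_Icc] at hx; omega
  have hnotA' : x + 2^k ∉ A' := fun h => by
    have := Finset.mem_Icc.mp (hA' h); omega
  simp only [extT, Finset.mem_union]
  by_cases hxA : x ∈ A' <;> simp only [hxA, if_true, if_false]
  · constructor
    · rintro ((h|h)|h)
      · exact absurd h hnotA'
      · split at h
        · assumption
        · exact absurd h (Finset.notMem_empty _)
      · split at h
        · rcases Finset.mem_image.mp h with ⟨y, hy, hyx⟩
          have : y = x := by omega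
          subst this
          exact absurd hxA (Finset.mem_sdiff.mp hy).2
        · exact absurd h (Finset.notMem_empty _)
    · intro hb
      refine Or.inl (Or.inr ?_)
      rw [hb, if_pos rfl]
      exact shift_mem.mpr hxA
  · constructor
    · rintro ((h|h)|h)
      · exact absurd h hnotA'
      · split at h
        · rw [shift_mem] at h; exact absurd h hxA
        · exact absurd h (Finset.notMem_empty _)
      · split at h
        · assumption
        · exact absurd h (Finset.notMem_empty _)
    · intro hb
      refine Or.inr ?_
      rw [hb, if_pos rfl]
      exact shift_mem.mpr (Finset.mem_sdiff.mpr ⟨hx, hxA⟩)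

lemma extT_subset {k : ℕ} {A' : Finset ℕ} (hA' : A' ⊆ Finset.Icc 1 (2^k)) (b : Bool × Bool) :
    extT k A' b ⊆ Finset.Icc 1 (2 ^ (k+1)) := by
  intro y hy
  have hIcc : ∀ S : Finset ℕ, S ⊆ Finset.Icc 1 (2^k) → y ∈ S.image (· + 2^k) →
      y ∈ Finset.Icc 1 (2^(k+1)) := by
    intro S hS hyS
    rcases Finset.mem_image.mp hyS with ⟨x, hx, hxy⟩
    have := Finset.mem_Icc.mp (hS hx)
    rw [Finset.mem_Icc, pow_succ]
    omega
  have hlow : ∀ z ∈ Finset.Icc 1 (2^k), z ∈ Finset.Icc 1 (2^(k+1)) := by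
    intro z hz
    rw [Finset.mem_Icc] at *
    have : (2:ℕ)^k ≤ 2^(k+1) := Nat.pow_le_pow_right (by norm_num) (by omega)
    omega
  simp only [extT, Finset.mem_union] at hy
  rcases hy with (h|h)|h
  · exact hlow _ (hA' h)
  · split at h
    · exact hIcc _ hA' h
    · exact absurd h (Finset.notMem_empty _)
  · split at h
    · exact hIcc _ (fun z hz => (Finset.mem_sdiff.mp hz).1) h
    · exact absurd h (Finset.notMem_empty _)

lemma pow_lt_le {k' k : ℕ} (h : k' < k) : 2 * 2^k' ≤ 2^k := by
  calc 2 * 2^k' = 2^(k'+1) := by ring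
  _ ≤ 2^k := Nat.pow_le_pow_right (by norm_num) (by omega)

lemma extT_mem_Tset {k : ℕ} {A' : Finset ℕ} (hA' : A' ∈ Tset k) (b : Bool × Bool) :
    extT k A' b ∈ Tset (k+1) := by
  rw [mem_Tset] at hA' ⊢
  obtain ⟨hsub, h1, hcond⟩ := hA'
  have h2k : 0 < 2^k := Nat.pow_pos (by norm_num)
  refine ⟨extT_subset hsub b, ?_, ?_⟩
  · rw [mem_extT_low hsub (by omega)]
    exact h1
  · intro k' hk' i hi j hj hij
    rw [Finset.mem_Icc] at hi hj
    rcases Nat.lt_succ_iff_lt_or_eq.mp hk' with hk' | hk'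
    · have hle := pow_lt_le hk'
      rw [mem_extT_low hsub (by omega), mem_extT_low hsub (by omega)] at hij
      rw [mem_extT_low hsub (by omega), mem_extT_low hsub (by omega)]
      exact hcond k' hk' i (Finset.mem_Icc.mpr (by omega)) j (Finset.mem_Icc.mpr (by omega)) hij
    · subst hk'
      rw [mem_extT_low hsub (by omega), mem_extT_low hsub (by omega)] at hij
      rw [mem_extT_high hsub (Finset.mem_Icc.mpr (by omega)),
        mem_extT_high hsub (Finset.mem_Icc.mpr (by omega))]
      by_cases hiA : i ∈ A' <;> by_cases hjA : j ∈ A' <;>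
        simp [hiA, hjA] at hij ⊢ <;> tauto

lemma extT_inter {k : ℕ} {A' : Finset ℕ} (hA' : A' ⊆ Finset.Icc 1 (2^k)) (b : Bool × Bool) :
    extT k A' b ∩ Finset.Icc 1 (2^k) = A' := by
  ext x
  rw [Finset.mem_inter]
  constructor
  · rintro ⟨hx, hxI⟩
    rw [mem_extT_low hA' (Finset.mem_Icc.mp hxI).2] at hx
    exact hx
  · intro hx
    exact ⟨(mem_extT_low hA' (Finset.mem_Icc.mp (hA' hx)).2).mpr hx, hA' hx⟩

lemma eq_extT_of {k : ℕ} {A' A : Finset ℕ} (hsub : A' ⊆ Finset.Icc 1 (2^k))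
    (hAsub : A ⊆ Finset.Icc 1 (2^(k+1))) (hA'A : A' ⊆ A)
    (hAint : A ∩ Finset.Icc 1 (2^k) = A')
    (hkey : ∀ x ∈ Finset.Icc 1 (2^k), ∀ y ∈ Finset.Icc 1 (2^k),
        ((x ∈ A) ↔ (y ∈ A)) → ((x + 2^k ∈ A) ↔ (y + 2^k ∈ A)))
    (h1A : 1 ∉ A) (b : Bool × Bool)
    (hb1 : (1 + 2^k ∈ A) ↔ b.1 = true)
    (hb2 : ∀ x ∈ A', ((x + 2^k ∈ A) ↔ b.2 = true)) :
    extT k A' b = A := by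
  have h2k : 0 < 2^k := Nat.pow_pos (by norm_num)
  have hpow : (2:ℕ)^(k+1) = 2^k + 2^k := by rw [pow_succ]; ring
  ext y
  by_cases hy : y ≤ 2^k
  · rw [mem_extT_low hsub hy]
    constructor
    · exact fun h => hA'A h
    · intro h
      have h1 := Finset.mem_Icc.mp (hAsub h)
      rw [← hAint]
      exact Finset.mem_inter.mpr ⟨h, Finset.mem_Icc.mpr (by omega)⟩
  · by_cases hy2 : y ≤ 2^(k+1)
    · obtain ⟨x, rfl⟩ : ∃ x, y = x + 2^k := ⟨y - 2^k, by omega⟩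
      have hx : x ∈ Finset.Icc 1 (2^k) := Finset.mem_Icc.mpr (by omega)
      rw [mem_extT_high hsub hx]
      by_cases hxA : x ∈ A'
      · simp only [hxA, if_true]
        exact (hb2 x hxA).symm
      · simp only [hxA, if_false]
        have hxnA : x ∉ A := by
          intro h
          exact hxA (hAint ▸ Finset.mem_inter.mpr ⟨h, hx⟩)
        have := hkey x hx 1 (Finset.mem_Icc.mpr (by omega))
          (iff_of_false hxnA h1A)
        rw [this, hb1]
    · have h1 : y ∉ A := fun h => hy2 (Finset.mem_Icc.mp (hAsub h)).2
      have h2 : y ∉ extT k A' b := fun h =>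
        hy2 (Finset.mem_Icc.mp (extT_subset hsub b h)).2
      exact iff_of_false h2 h1

lemma fiber_eq_image {k : ℕ} {A' : Finset ℕ} (hA' : A' ∈ Tset k) :
    (Tset (k+1)).filter (fun A => A ∩ Finset.Icc 1 (2^k) = A')
      = (Finset.univ : Finset (Bool × Bool)).image (extT k A') := by
  have hsub := (mem_Tset.mp hA').1
  ext A
  rw [Finset.mem_filter, Finset.mem_image]
  constructor
  · rintro ⟨hAT, hAint⟩
    have h2k : 0 < 2^k := Nat.pow_pos (by norm_num)
    obtain ⟨hAsub, h1A, hcondA⟩ := mem_Tset.mp hAT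
    have hA'A : A' ⊆ A := by
      intro x hx; rw [← hAint] at hx; exact (Finset.mem_inter.mp hx).1
    have hkey : ∀ x ∈ Finset.Icc 1 (2^k), ∀ y ∈ Finset.Icc 1 (2^k),
        ((x ∈ A) ↔ (y ∈ A)) → ((x + 2^k ∈ A) ↔ (y + 2^k ∈ A)) :=
      fun x hx y hy => hcondA k (by omega) x hx y hy
    refine ⟨(if 1 + 2^k ∈ A then true else false,
             if ∃ x ∈ A', x + 2^k ∈ A then true else false), Finset.mem_univ _, ?_⟩
    refine eq_extT_of hsub hAsub hA'A hAint hkey h1A _ ?_ ?_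
    · by_cases h : 1 + 2^k ∈ A <;> simp [h]
    · intro x hx
      by_cases h : ∃ x ∈ A', x + 2^k ∈ A
      · simp only [h, if_true]
        obtain ⟨x0, hx0, hx0A⟩ := h
        have := hkey x (hsub hx) x0 (hsub hx0)
          (iff_of_true (hA'A hx) (hA'A hx0))
        simp [this, hx0A]
      · simp only [h, if_false]
        simp only [Bool.false_eq_true, iff_false]
        exact fun hc => h ⟨x, hx, hc⟩
  · rintro ⟨b, -, rfl⟩
    exact ⟨extT_mem_Tset hA' b, extT_inter hsub b⟩

lemma fiber_card_nonempty {k : ℕ} {A' : Finset ℕ} (hA' : A' ∈ Tset k) (hne : A' ≠ ∅) :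
    ((Finset.univ : Finset (Bool × Bool)).image (extT k A')).card = 4 := by
  have hsub := (mem_Tset.mp hA').1
  have h1A' := (mem_Tset.mp hA').2.1
  have h2k : 0 < 2^k := Nat.pow_pos (by norm_num)
  obtain ⟨a, ha⟩ := Finset.nonempty_iff_ne_empty.mpr hne
  have hinj : Function.Injective (extT k A') := by
    intro b b' hbb
    have h1 : ∀ c : Bool × Bool, (1 + 2^k ∈ extT k A' c) ↔ c.1 = true := by
      intro c
      rw [mem_extT_high hsub (Finset.mem_Icc.mpr (by omega))]
      simp [h1A']
    have h2 : ∀ c : Bool × Bool, (a + 2^k ∈ extT k A' c) ↔ c.2 = true := by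
      intro c
      rw [mem_extT_high hsub (hsub ha)]
      simp [ha]
    have e1 : b.1 = b'.1 := by
      have h : (b.1 = true) ↔ (b'.1 = true) := by rw [← h1 b, ← h1 b', hbb]
      cases hb : b.1 <;> cases hb' : b'.1 <;> simp [hb, hb'] at h ⊢
    have e2 : b.2 = b'.2 := by
      have h : (b.2 = true) ↔ (b'.2 = true) := by rw [← h2 b, ← h2 b', hbb]
      cases hb : b.2 <;> cases hb' : b'.2 <;> simp [hb, hb'] at h ⊢
    exact Prod.ext e1 e2
  rw [Finset.card_image_of_injective _ hinj]
  simp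

lemma fiber_card_empty {k : ℕ} :
    ((Finset.univ : Finset (Bool × Bool)).image (extT k (∅ : Finset ℕ))).card = 2 := by
  have h2k : 0 < 2^k := Nat.pow_pos (by norm_num)
  have h : ∀ b : Bool × Bool, extT k ∅ b =
      if b.1 then (Finset.Icc 1 (2^k)).image (· + 2^k) else ∅ := by
    intro b
    simp [extT]
  have himg : (Finset.univ : Finset (Bool × Bool)).image (extT k (∅ : Finset ℕ))
      = {∅, (Finset.Icc 1 (2^k)).image (· + 2^k)} := by
    ext B
    simp only [Finset.mem_image, Finset.mem_univ, true_and, Finset.mem_insert,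
      Finset.mem_singleton]
    constructor
    · rintro ⟨b, rfl⟩
      rw [h b]
      cases hb : b.1 <;> simp [hb]
    · rintro (rfl | rfl)
      · exact ⟨(false, false), by rw [h]; simp⟩
      · exact ⟨(true, false), by rw [h]; simp⟩
  rw [himg]
  rw [Finset.card_pair]
  intro hc
  have : 1 + 2^k ∈ (∅ : Finset ℕ) := by
    rw [hc]
    exact shift_mem.mpr (Finset.mem_Icc.mpr (by omega))
  simp at this

lemma inter_mem_Tset {k : ℕ} {A : Finset ℕ} (hA : A ∈ Tset (k+1)) :
    A ∩ Finset.Icc 1 (2^k) ∈ Tset k := by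
  obtain ⟨hAsub, h1A, hcondA⟩ := mem_Tset.mp hA
  have h2k : 0 < 2^k := Nat.pow_pos (by norm_num)
  rw [mem_Tset]
  refine ⟨Finset.inter_subset_right, ?_, ?_⟩
  · intro h; exact h1A (Finset.mem_inter.mp h).1
  · intro k' hk' i hi j hj hij
    have hle := pow_lt_le hk'
    rw [Finset.mem_Icc] at hi hj
    have hmem : ∀ z, 1 ≤ z → z ≤ 2^k → ((z ∈ A ∩ Finset.Icc 1 (2^k)) ↔ z ∈ A) := by
      intro z h1 h2
      rw [Finset.mem_inter, Finset.mem_Icc]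
      tauto
    rw [hmem i (by omega) (by omega), hmem j (by omega) (by omega)] at hij
    rw [hmem _ (by omega) (by omega), hmem _ (by omega) (by omega)]
    exact hcondA k' (by omega) i (Finset.mem_Icc.mpr (by omega)) j (Finset.mem_Icc.mpr (by omega)) hij

lemma card_Tset_succ (k : ℕ) : (Tset (k+1)).card + 2 = 4 * (Tset k).card := by
  have hcard : (Tset (k+1)).card =
      ∑ A' ∈ Tset k, ((Tset (k+1)).filter (fun A => A ∩ Finset.Icc 1 (2^k) = A')).card := by
    exact Finset.card_eq_sum_card_fiberwise (fun A hA => inter_mem_Tset hA)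
  have hfib : ∀ A' ∈ Tset k,
      ((Tset (k+1)).filter (fun A => A ∩ Finset.Icc 1 (2^k) = A')).card =
        if A' = ∅ then 2 else 4 := by
    intro A' hA'
    rw [fiber_eq_image hA']
    split
    · subst ‹A' = ∅›; exact fiber_card_empty
    · exact fiber_card_nonempty hA' ‹A' ≠ ∅›
  rw [hcard, Finset.sum_congr rfl hfib]
  have hmem := empty_mem_Tset k
  rw [← Finset.sum_erase_add _ _ hmem]
  rw [if_pos rfl]
  have : ∑ A' ∈ (Tset k).erase ∅, (if A' = ∅ then 2 else 4) =
      4 * ((Tset k).card - 1) := by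
    rw [Finset.sum_congr rfl (fun A' hA' => if_neg (Finset.ne_of_mem_erase hA'))]
    rw [Finset.sum_const, Finset.card_erase_of_mem hmem]
    ring
  rw [this]
  have hpos : 1 ≤ (Tset k).card := Finset.card_pos.mpr ⟨∅, hmem⟩
  omega

lemma Tset_zero : Tset 0 = {∅} := by
  ext A
  rw [mem_Tset]
  constructor
  · rintro ⟨hsub, h1, _⟩
    simp only [Finset.mem_singleton]
    ext x
    simp only [Finset.notMem_empty, iff_false]
    intro hx
    have := hsub hx
    simp at this
    exact h1 (this ▸ hx)
  · rintro h
    simp only [Finset.mem_singleton] at h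
    subst h
    exact mem_Tset.mp (empty_mem_Tset 0)

lemma card_Tset (k : ℕ) : 3 * (Tset k).card = 4 ^ k + 2 := by
  induction k with
  | zero => rw [Tset_zero]; simp
  | succ k ih =>
    have h := card_Tset_succ k
    have : 4 ^ (k+1) = 4 * 4 ^ k := by ring
    omega

def rhoOf (k : ℕ) (A : Finset ℕ) : Fin 2 → Finset ℕ :=
  fun p => if p = 0 then Finset.Icc 1 (2^k) \ A else A

lemma sup_fin2 (ρ : Fin 2 → Finset ℕ) : Finset.univ.sup ρ = ρ 0 ∪ ρ 1 := by
  have : (Finset.univ : Finset (Fin 2)) = {0, 1} := by decide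
  rw [this]
  simp [Finset.sup_insert, Finset.sup_singleton, Finset.sup_eq_union]

lemma rhoOf_zero (k : ℕ) (A : Finset ℕ) : rhoOf k A 0 = Finset.Icc 1 (2^k) \ A := rfl

lemma rhoOf_one (k : ℕ) (A : Finset ℕ) : rhoOf k A 1 = A := by
  simp only [rhoOf, if_neg (by decide : (1 : Fin 2) ≠ 0)]

lemma rhoOf_injective (k : ℕ) : Function.Injective (rhoOf k) := by
  intro A B h
  have := congrFun h 1
  rwa [rhoOf_one, rhoOf_one] at this

lemma isRvalid_iff {k : ℕ} {ρ : Fin 2 → Finset ℕ} :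
    IsRvalid k ρ ↔ ∃ A ∈ Tset k, ρ = rhoOf k A := by
  have h2k : 0 < 2^k := Nat.pow_pos (by norm_num)
  constructor
  · rintro ⟨⟨hdisj, hsup⟩, h1, hcond⟩
    have hsup' : ρ 0 ∪ ρ 1 = Finset.Icc 1 (2^k) := by rw [← sup_fin2]; exact hsup
    set A := ρ 1 with hAdef
    have hA_sub : A ⊆ Finset.Icc 1 (2^k) := fun x hx =>
      hsup' ▸ Finset.mem_union_right _ hx
    have h1ρ0 : 1 ∈ ρ 0 := h1 0 rfl
    have hd01 : Disjoint (ρ 0) (ρ 1) := hdisj 0 1 (by decide)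
    have h1A : 1 ∉ A := Finset.disjoint_left.mp hd01 h1ρ0
    have hρ0 : ρ 0 = Finset.Icc 1 (2^k) \ A := by
      ext x
      rw [Finset.mem_sdiff]
      constructor
      · intro hx
        exact ⟨hsup' ▸ Finset.mem_union_left _ hx, Finset.disjoint_left.mp hd01 hx⟩
      · rintro ⟨hIcc, hnA⟩
        have : x ∈ ρ 0 ∪ ρ 1 := hsup'.symm ▸ hIcc
        rcases Finset.mem_union.mp this with h | h
        · exact h
        · exact absurd h hnA
    refine ⟨A, mem_Tset.mpr ⟨hA_sub, h1A, ?_⟩, ?_⟩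
    · intro k' hk' i hi j hj hij
      have hle := pow_lt_le hk'
      have hi' := Finset.mem_Icc.mp hi
      have hj' := Finset.mem_Icc.mp hj
      have hsame : ∃ α, i ∈ ρ α ∧ j ∈ ρ α := by
        by_cases hiA : i ∈ A
        · exact ⟨1, hiA, hij.mp hiA⟩
        · have hjA : j ∉ A := fun h => hiA (hij.mpr h)
          refine ⟨0, ?_, ?_⟩ <;> rw [hρ0, Finset.mem_sdiff] <;>
            exact ⟨Finset.mem_Icc.mpr (by omega), by assumption⟩
      obtain ⟨β, hb1, hb2⟩ := hcond k' hk' i hi j hj hsame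
      have fin2 : ∀ p : Fin 2, p = 0 ∨ p = 1 := by decide
      rcases fin2 β with rfl | rfl
      · rw [hρ0, Finset.mem_sdiff] at hb1 hb2
        exact iff_of_false hb1.2 hb2.2
      · exact iff_of_true hb1 hb2
    · funext p
      have fin2 : ∀ p : Fin 2, p = 0 ∨ p = 1 := by decide
      rcases fin2 p with rfl | rfl
      · rw [rhoOf_zero]; exact hρ0
      · rw [rhoOf_one]
  · rintro ⟨A, hA, rfl⟩
    obtain ⟨hsub, h1A, hcondA⟩ := mem_Tset.mp hA
    refine ⟨⟨?_, ?_⟩, ?_, ?_⟩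
    · intro p q hpq
      have fin2 : ∀ p : Fin 2, p = 0 ∨ p = 1 := by decide
      rcases fin2 p with rfl | rfl <;> rcases fin2 q with rfl | rfl <;> first
        | exact absurd rfl hpq
        | (rw [rhoOf_zero, rhoOf_one]; exact Finset.sdiff_disjoint)
        | (rw [rhoOf_zero, rhoOf_one]; exact Finset.sdiff_disjoint.symm)
    · rw [sup_fin2, rhoOf_zero, rhoOf_one]
      exact Finset.sdiff_union_of_subset hsub
    · intro p hp
      have : p = 0 := Fin.ext hp
      subst this
      rw [rhoOf_zero, Finset.mem_sdiff]
      exact ⟨Finset.mem_Icc.mpr (by omega), h1A⟩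
    · rintro k' hk' i hi j hj ⟨α, hα1, hα2⟩
      have hle := pow_lt_le hk'
      have hi' := Finset.mem_Icc.mp hi
      have hj' := Finset.mem_Icc.mp hj
      have fin2 : ∀ p : Fin 2, p = 0 ∨ p = 1 := by decide
      have hij : (i ∈ A) ↔ (j ∈ A) := by
        rcases fin2 α with rfl | rfl
        · rw [rhoOf_zero, Finset.mem_sdiff] at hα1 hα2
          exact iff_of_false hα1.2 hα2.2
        · rw [rhoOf_one] at hα1 hα2
          exact iff_of_true hα1 hα2
      have hshift := hcondA k' hk' i hi j hj hij
      by_cases h : i + 2^k' ∈ A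
      · exact ⟨1, by rw [rhoOf_one]; exact h, by rw [rhoOf_one]; exact hshift.mp h⟩
      · refine ⟨0, ?_, ?_⟩ <;> rw [rhoOf_zero, Finset.mem_sdiff]
        · exact ⟨Finset.mem_Icc.mpr (by omega), h⟩
        · exact ⟨Finset.mem_Icc.mpr (by omega), fun hc => h (hshift.mpr hc)⟩


theorem stmt15 (k : ℕ) :
    3 * {ρ : Fin 2 → Finset ℕ | IsRvalid k ρ}.ncard = 4 ^ k + 2 := by
  have hset : {ρ : Fin 2 → Finset ℕ | IsRvalid k ρ} = ↑((Tset k).image (rhoOf k)) := by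
    ext ρ
    simp only [Set.mem_setOf_eq, Finset.coe_image, Set.mem_image, Finset.mem_coe,
      isRvalid_iff]
    constructor
    · rintro ⟨A, hA, rfl⟩; exact ⟨A, hA, rfl⟩
    · rintro ⟨A, hA, rfl⟩; exact ⟨A, hA, rfl⟩
  rw [hset, Set.ncard_coe_finset, Finset.card_image_of_injective _ (rhoOf_injective k),
    card_Tset]
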